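/- Under assumption (SH) and in the setting of Theorem 6.3 (finite 𝒜 = {A₁,…,A_M}, π^N = Σ_i α_i^N δ_{A_i} with α_1^N → 1 and α_i^N → 0 for i ≥ 2), define for each (s,x₀) ∈ [0,T] × ℝⁿ the feedback controls ū^N(s,x₀) := −R^{-1} B̃ᵀ P̃^N(s) (x₀,…,x₀) and ū(s,x₀) := −R^{-1} Bᵀ P(s) x₀, where P̃^N solves the augmented Riccati equation with data (Ã, B̃, Q̃^N, Q̃_f^N) and terminal value Q̃_f^N at time T, and P solves the n-dimensional Riccati equation for A₁ with terminal value Q_f. Then for every compact K ⊆ ℝⁿ, ū^N(s,x₀) → ū(s,x₀) uniformly on [0,T] × K as N → ∞. -/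

import Mathlib

open MeasureTheory Set Matrix Filter Topology

attribute [local instance] Matrix.normedAddCommGroup Matrix.normedSpace

/-- Application of a matrix to a Euclidean vector. -/
noncomputable def app {ι κ : Type*} [Fintype ι] [Fintype κ] [DecidableEq κ]
    (M : Matrix ι κ ℝ) (v : EuclideanSpace ℝ κ) : EuclideanSpace ℝ ι :=
  Matrix.toEuclideanLin M v

/-- The augmented block-diagonal state matrix `Ã = diag(A₁, …, A_M)`. -/
def augA {n M : ℕ} (A : Fin M → Matrix (Fin n) (Fin n) ℝ) :
    Matrix (Fin n × Fin M) (Fin n × Fin M) ℝ :=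
  Matrix.blockDiagonal A

/-- The augmented control matrix `B̃ = (B; …; B)`. -/
def augB {n m M : ℕ} (B : Matrix (Fin n) (Fin m) ℝ) :
    Matrix (Fin n × Fin M) (Fin m) ℝ :=
  Matrix.of fun p j => B p.1 j

/-- The augmented block-diagonal cost matrix `diag(α₁ Q, …, α_M Q)`. -/
def augQ {n M : ℕ} (α : Fin M → ℝ) (Q : Matrix (Fin n) (Fin n) ℝ) :
    Matrix (Fin n × Fin M) (Fin n × Fin M) ℝ :=
  Matrix.blockDiagonal (fun i => α i • Q)

/-- The vector `(x₀, …, x₀) ∈ ℝ^{nM}` whose `M` blocks all equal `x₀`. -/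
def bigvec {n M : ℕ} (x₀ : EuclideanSpace ℝ (Fin n)) :
    EuclideanSpace ℝ (Fin n × Fin M) :=
  WithLp.toLp 2 (fun p => x₀ p.1)

/-! ### Auxiliary definitions and lemmas -/

/-- The "limit weight" vector: indicator of the index `i₀`. -/
def ev {M : ℕ} (i₀ : Fin M) : Fin M → ℝ := fun i => if i = i₀ then 1 else 0

section Aux

variable {n m M : ℕ}

lemma hasDerivAt_matrix {ι κ : Type*} [Fintype ι] [Fintype κ]
    {f : ℝ → Matrix ι κ ℝ} {f' : Matrix ι κ ℝ} {x : ℝ} :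
    HasDerivAt f f' x ↔ ∀ i j, HasDerivAt (fun t => f t i j) (f' i j) x := by
  constructor
  · intro h i j
    exact (hasDerivAt_pi.1 ((hasDerivAt_pi.1 h) i)) j
  · intro h
    exact hasDerivAt_pi.2 fun i => hasDerivAt_pi.2 fun j => h i j

lemma matrix_norm_mul_le {ι κ τ : Type*} [Fintype ι] [Fintype κ] [Fintype τ]
    (A : Matrix ι κ ℝ) (B : Matrix κ τ ℝ) :
    ‖A * B‖ ≤ (Fintype.card κ : ℝ) * ‖A‖ * ‖B‖ := by
  rw [Matrix.norm_le_iff (by positivity)]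
  intro i j
  rw [Matrix.mul_apply]
  calc ‖∑ k, A i k * B k j‖ ≤ ∑ k, ‖A i k * B k j‖ := norm_sum_le _ _
    _ ≤ ∑ k : κ, ‖A‖ * ‖B‖ := by
        refine Finset.sum_le_sum fun k _ => ?_
        rw [norm_mul]
        exact mul_le_mul (Matrix.norm_entry_le_entrywise_sup_norm A)
          (Matrix.norm_entry_le_entrywise_sup_norm B) (norm_nonneg _) (norm_nonneg _)
    _ = (Fintype.card κ : ℝ) * ‖A‖ * ‖B‖ := by
        rw [Finset.sum_const, Finset.card_univ, nsmul_eq_mul, mul_assoc]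

lemma app_apply {ι κ : Type*} [Fintype ι] [Fintype κ] [DecidableEq κ]
    (M : Matrix ι κ ℝ) (v : EuclideanSpace ℝ κ) (i : ι) :
    app M v i = ∑ j, M i j * v j := rfl

lemma app_sub {ι κ : Type*} [Fintype ι] [Fintype κ] [DecidableEq κ]
    (M M' : Matrix ι κ ℝ) (v : EuclideanSpace ℝ κ) :
    app M v - app M' v = app (M - M') v := by
  simp [app, map_sub]

lemma coord_le {ι : Type*} [Fintype ι] (v : EuclideanSpace ℝ ι) (i : ι) : |v i| ≤ ‖v‖ := by
  rw [EuclideanSpace.norm_eq]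
  have h1 : ‖v i‖ ^ 2 ≤ ∑ j, ‖v j‖ ^ 2 :=
    Finset.single_le_sum (f := fun j => ‖v j‖ ^ 2) (fun j _ => sq_nonneg _) (Finset.mem_univ i)
  calc |v i| = Real.sqrt (‖v i‖ ^ 2) := by
        rw [Real.sqrt_sq_eq_abs, Real.norm_eq_abs, abs_abs]
    _ ≤ _ := Real.sqrt_le_sqrt h1

lemma norm_le_card {ι : Type*} [Fintype ι] (v : EuclideanSpace ℝ ι) (C : ℝ) (hC : 0 ≤ C)
    (h : ∀ i, |v i| ≤ C) : ‖v‖ ≤ (Fintype.card ι : ℝ) * C := by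
  rw [EuclideanSpace.norm_eq]
  have h1 : ∑ j, ‖v j‖ ^ 2 ≤ (Fintype.card ι : ℝ) * C ^ 2 := by
    calc ∑ j, ‖v j‖ ^ 2 ≤ ∑ _j : ι, C ^ 2 := by
          refine Finset.sum_le_sum fun j _ => ?_
          have := h j
          rw [Real.norm_eq_abs]
          nlinarith [abs_nonneg (v j)]
      _ = (Fintype.card ι : ℝ) * C ^ 2 := by
          rw [Finset.sum_const, Finset.card_univ, nsmul_eq_mul]
  calc Real.sqrt (∑ j, ‖v j‖ ^ 2) ≤ Real.sqrt ((Fintype.card ι : ℝ) * C ^ 2) :=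
        Real.sqrt_le_sqrt h1
    _ = Real.sqrt (Fintype.card ι : ℝ) * C := by
        rw [Real.sqrt_mul (by positivity), Real.sqrt_sq hC]
    _ ≤ (Fintype.card ι : ℝ) * C := by
        have h2 : Real.sqrt (Fintype.card ι : ℝ) ≤ (Fintype.card ι : ℝ) := by
          have h3 : ((Fintype.card ι : ℝ)) ≤ ((Fintype.card ι : ℝ)) ^ 2 := by
            rcases Nat.eq_zero_or_pos (Fintype.card ι) with h | h
            · simp [h]
            · have h4 : (1 : ℝ) ≤ (Fintype.card ι : ℝ) := by exact_mod_cast h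
              nlinarith
          calc Real.sqrt (Fintype.card ι : ℝ) ≤ Real.sqrt (((Fintype.card ι : ℝ)) ^ 2) :=
                Real.sqrt_le_sqrt h3
            _ = (Fintype.card ι : ℝ) := Real.sqrt_sq (by positivity)
        exact mul_le_mul_of_nonneg_right h2 hC

lemma app_norm_le {ι κ : Type*} [Fintype ι] [Fintype κ] [DecidableEq κ]
    (M : Matrix ι κ ℝ) (v : EuclideanSpace ℝ κ) :
    ‖app M v‖ ≤ (Fintype.card ι : ℝ) * ((Fintype.card κ : ℝ) * ‖M‖ * ‖v‖) := by
  refine norm_le_card _ _ (by positivity) fun i => ?_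
  rw [app_apply]
  calc |∑ j, M i j * v j| ≤ ∑ j, |M i j * v j| := Finset.abs_sum_le_sum_abs _ _
    _ ≤ ∑ _j : κ, ‖M‖ * ‖v‖ := by
        refine Finset.sum_le_sum fun j _ => ?_
        rw [abs_mul]
        exact mul_le_mul (Matrix.norm_entry_le_entrywise_sup_norm M) (coord_le v j)
          (abs_nonneg _) (norm_nonneg _)
    _ = (Fintype.card κ : ℝ) * ‖M‖ * ‖v‖ := by
        rw [Finset.sum_const, Finset.card_univ, nsmul_eq_mul, mul_assoc]

lemma HasDerivAt.matrix_mul {ι κ τ : Type*} [Fintype ι] [Fintype κ] [Fintype τ]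
    {f : ℝ → Matrix ι κ ℝ} {g : ℝ → Matrix κ τ ℝ} {f' : Matrix ι κ ℝ} {g' : Matrix κ τ ℝ} {x : ℝ}
    (hf : HasDerivAt f f' x) (hg : HasDerivAt g g' x) :
    HasDerivAt (fun t => f t * g t) (f' * g x + f x * g') x := by
  rw [hasDerivAt_matrix] at hf hg ⊢
  intro i j
  simp only [Matrix.mul_apply, Matrix.add_apply]
  rw [← Finset.sum_add_distrib]
  exact HasDerivAt.fun_sum fun k _ => (hf i k).mul (hg k j)

lemma hasDerivAt_augQ (c : Fin M → ℝ) {P : ℝ → Matrix (Fin n) (Fin n) ℝ}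
    {P' : Matrix (Fin n) (Fin n) ℝ} {t : ℝ} (h : HasDerivAt P P' t) :
    HasDerivAt (fun s => augQ c (P s)) (augQ c P') t := by
  rw [hasDerivAt_matrix] at h ⊢
  rintro ⟨p, i⟩ ⟨q, k⟩
  by_cases hik : i = k
  · subst hik
    simp only [augQ, Matrix.blockDiagonal_apply, if_pos rfl, Matrix.smul_apply, smul_eq_mul]
    simpa using (h p q).const_mul (c i)
  · simp only [augQ, Matrix.blockDiagonal_apply, if_neg hik]
    exact hasDerivAt_const _ _

lemma augQ_addα (Q : Matrix (Fin n) (Fin n) ℝ) (β γ : Fin M → ℝ) :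
    augQ (β + γ) Q = augQ β Q + augQ γ Q := by
  ext ⟨p, i⟩ ⟨q, k⟩
  by_cases h : i = k <;>
    simp [augQ, Matrix.blockDiagonal_apply, h, add_mul]

lemma augQ_smulα (Q : Matrix (Fin n) (Fin n) ℝ) (s : ℝ) (β : Fin M → ℝ) :
    augQ (s • β) Q = s • augQ β Q := by
  ext ⟨p, i⟩ ⟨q, k⟩
  by_cases h : i = k <;>
    simp [augQ, Matrix.blockDiagonal_apply, h, mul_assoc]

/-- `augQ` as a linear map in the weight vector. -/
noncomputable def augQalpha (Q : Matrix (Fin n) (Fin n) ℝ) :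
    (Fin M → ℝ) →ₗ[ℝ] Matrix (Fin n × Fin M) (Fin n × Fin M) ℝ where
  toFun := fun β => augQ β Q
  map_add' := fun β γ => augQ_addα Q β γ
  map_smul' := fun s β => by simp [augQ_smulα Q s β]

lemma ringid {S : Type*} [Ring S] (At Aa U q1 q2 X Y : S) :
    -(At * X + X * Aa - X * U * X + q1) - -(At * Y + Y * Aa - Y * U * Y + q2)
      = -(At * (X - Y) + (X - Y) * Aa - ((X - Y) * U * X + Y * U * (X - Y)) + (q1 - q2)) := by
  noncomm_ring

lemma regroup {S : Type*} [Monoid S] (X b r bt Y : S) :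
    X * b * r * bt * Y = X * (b * r * bt) * Y := by
  simp [mul_assoc]

lemma gb_mono {δ K ε x y : ℝ} (hδ : 0 ≤ δ) (hK : 0 < K) (hε : 0 ≤ ε) (hxy : x ≤ y) :
    gronwallBound δ K ε x ≤ gronwallBound δ K ε y := by
  simp only [gronwallBound_of_K_ne_0 hK.ne']
  have h1 : Real.exp (K * x) ≤ Real.exp (K * y) :=
    Real.exp_le_exp.2 (by nlinarith)
  have h2 : (0:ℝ) ≤ ε / K := by positivity
  nlinarith [Real.exp_pos (K * x)]

lemma lemA (i₀ : Fin M) (A : Fin M → Matrix (Fin n) (Fin n) ℝ) (X : Matrix (Fin n) (Fin n) ℝ) :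
    (Matrix.blockDiagonal A)ᵀ * augQ (ev i₀) X = augQ (ev i₀) ((A i₀)ᵀ * X) := by
  rw [Matrix.blockDiagonal_transpose, augQ, augQ, ← Matrix.blockDiagonal_mul]
  refine congrArg Matrix.blockDiagonal ?_
  funext i
  by_cases h : i = i₀ <;> simp [ev, h, Matrix.mul_smul]

lemma lemB (i₀ : Fin M) (A : Fin M → Matrix (Fin n) (Fin n) ℝ) (X : Matrix (Fin n) (Fin n) ℝ) :
    augQ (ev i₀) X * Matrix.blockDiagonal A = augQ (ev i₀) (X * A i₀) := by
  rw [augQ, augQ, ← Matrix.blockDiagonal_mul]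
  refine congrArg Matrix.blockDiagonal ?_
  funext i
  by_cases h : i = i₀ <;> simp [ev, h, Matrix.smul_mul]

lemma lemC1 (c : Fin M → ℝ) (X : Matrix (Fin n) (Fin n) ℝ) (B : Matrix (Fin n) (Fin m) ℝ) :
    augQ c X * augB B (M := M) = Matrix.of (fun (p : Fin n × Fin M) j => c p.2 * (X * B) p.1 j) := by
  ext ⟨p, i⟩ j
  simp only [Matrix.mul_apply, augQ, augB, Matrix.blockDiagonal_apply, Matrix.of_apply,
    Fintype.sum_prod_type_right]
  rw [Finset.sum_comm, Finset.mul_sum]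
  refine Finset.sum_congr rfl fun q _ => ?_
  simp [Finset.sum_ite_eq, Matrix.smul_apply, mul_assoc, mul_comm]
  ring

lemma lemC2 (c : Fin M → ℝ) (W : Matrix (Fin n) (Fin m) ℝ) (R' : Matrix (Fin m) (Fin m) ℝ) :
    Matrix.of (fun (p : Fin n × Fin M) j => c p.2 * W p.1 j) * R' =
      Matrix.of (fun (p : Fin n × Fin M) j => c p.2 * (W * R') p.1 j) := by
  ext ⟨p, i⟩ j
  simp [Matrix.mul_apply, Finset.mul_sum, mul_assoc]

lemma lemC3 (c : Fin M → ℝ) (W : Matrix (Fin n) (Fin m) ℝ) (B : Matrix (Fin n) (Fin m) ℝ) :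
    Matrix.of (fun (p : Fin n × Fin M) j => c p.2 * W p.1 j) * (augB B (M := M))ᵀ =
      Matrix.of (fun (p q : Fin n × Fin M) => c p.2 * (W * Bᵀ) p.1 q.1) := by
  ext ⟨p, i⟩ ⟨q, k⟩
  simp [Matrix.mul_apply, augB, Finset.mul_sum, mul_assoc]

lemma lemC4 (i₀ : Fin M) (Y : Matrix (Fin n) (Fin n) ℝ) (W : Matrix (Fin n) (Fin n) ℝ) :
    Matrix.of (fun (p q : Fin n × Fin M) => ev i₀ p.2 * W p.1 q.1) * augQ (ev i₀) Y =
      augQ (ev i₀) (W * Y) := by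
  ext ⟨p, i⟩ ⟨q, k⟩
  simp only [Matrix.mul_apply, augQ, Matrix.blockDiagonal_apply, Matrix.of_apply,
    Fintype.sum_prod_type_right]
  by_cases hik : i = k
  · subst hik
    by_cases h : i = i₀
    · subst h
      simp [ev, Finset.sum_ite_eq, Matrix.mul_apply, Finset.sum_mul, mul_assoc]
    · simp [ev, h, Finset.sum_ite_eq]
  · simp only [if_neg hik]
    by_cases h : k = i₀
    · subst h
      simp [ev, Ne.symm hik, if_neg hik]
    · simp [ev, h]

lemma lemD1 (i₀ : Fin M) (R' : Matrix (Fin m) (Fin m) ℝ) (B : Matrix (Fin n) (Fin m) ℝ)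
    (X : Matrix (Fin n) (Fin n) ℝ) :
    R' * (augB B (M := M))ᵀ * augQ (ev i₀) X =
      Matrix.of (fun j (qk : Fin n × Fin M) => ev i₀ qk.2 * (R' * Bᵀ * X) j qk.1) := by
  ext j ⟨q, k⟩
  simp only [Matrix.mul_apply, augQ, augB, Matrix.blockDiagonal_apply, Matrix.transpose_apply,
    Matrix.of_apply, Fintype.sum_prod_type_right, Matrix.smul_apply, smul_eq_mul,
    mul_ite, mul_zero, Finset.sum_ite_eq', Finset.mem_univ, if_true]
  rw [Finset.sum_comm]
  simp only [Finset.sum_ite_eq', Finset.mem_univ, if_true]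
  rw [Finset.mul_sum]
  refine Finset.sum_congr rfl fun r _ => ?_
  ring

lemma lemD2 (i₀ : Fin M) (W : Matrix (Fin m) (Fin n) ℝ) (x : EuclideanSpace ℝ (Fin n)) :
    app (Matrix.of fun j (qk : Fin n × Fin M) => ev i₀ qk.2 * W j qk.1) (bigvec x) =
      app W x := by
  ext j
  simp only [app_apply, Matrix.of_apply, bigvec, Fintype.sum_prod_type_right]
  rw [Finset.sum_comm]
  simp only [ev, ite_mul, one_mul, zero_mul, Finset.sum_ite_eq', Finset.mem_univ, if_true]

lemma regroupM' {ι κ : Type*} [Fintype ι] [Fintype κ]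
    (X : Matrix ι ι ℝ) (b : Matrix ι κ ℝ) (r : Matrix κ κ ℝ) (bt : Matrix κ ι ℝ)
    (Y : Matrix ι ι ℝ) :
    HMul.hMul (HMul.hMul (HMul.hMul (HMul.hMul X b) r) bt) Y
      = HMul.hMul (HMul.hMul X (HMul.hMul (HMul.hMul b r) bt)) Y := by
  simp only [Matrix.mul_assoc]

/-- Transport of the Riccati equation through the block embedding. -/
lemma transport (i₀ : Fin M) (A : Fin M → Matrix (Fin n) (Fin n) ℝ)
    (B : Matrix (Fin n) (Fin m) ℝ) (Ri : Matrix (Fin m) (Fin m) ℝ)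
    (Qm X : Matrix (Fin n) (Fin n) ℝ) :
    -((augA A)ᵀ * augQ (ev i₀) X + augQ (ev i₀) X * augA A
        - HMul.hMul (HMul.hMul (HMul.hMul (HMul.hMul (augQ (ev i₀) X) (augB B (M := M))) Ri)
            (augB B (M := M))ᵀ) (augQ (ev i₀) X) + augQ (ev i₀) Qm)
      = augQ (ev i₀) (-((A i₀)ᵀ * X + X * A i₀ - X * B * Ri * Bᵀ * X + Qm)) := by
  have h1 : (augA A)ᵀ * augQ (ev i₀) X = augQ (ev i₀) ((A i₀)ᵀ * X) := by
    rw [augA]; exact lemA i₀ A X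
  have h2 : augQ (ev i₀) X * augA A = augQ (ev i₀) (X * A i₀) := by
    rw [augA]; exact lemB i₀ A X
  have h3 : HMul.hMul (HMul.hMul (HMul.hMul (HMul.hMul (augQ (ev i₀) X) (augB B (M := M))) Ri)
        (augB B (M := M))ᵀ) (augQ (ev i₀) X)
      = augQ (ev i₀) (X * B * Ri * Bᵀ * X) := by
    rw [lemC1, lemC2, lemC3, lemC4]
  rw [h1, h2, h3]
  ext ⟨p, i⟩ ⟨q, k⟩
  by_cases h : i = k <;>
    simp [augQ, Matrix.blockDiagonal_apply, h, mul_add, mul_sub]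

end Aux

set_option maxHeartbeats 1000000 in
lemma mainbound {n m M : ℕ} (i₀ : Fin M) {T : ℝ} (hT : 0 < T)
    (B : Matrix (Fin n) (Fin m) ℝ) (Q Qf : Matrix (Fin n) (Fin n) ℝ)
    (Ri : Matrix (Fin m) (Fin m) ℝ)
    (A : Fin M → Matrix (Fin n) (Fin n) ℝ) (β : Fin M → ℝ)
    (PNf : ℝ → Matrix (Fin n × Fin M) (Fin n × Fin M) ℝ)
    (hPNf : ∀ t ∈ Set.Icc (0 : ℝ) T,
      HasDerivAt PNf
        (-((augA A)ᵀ * PNf t + PNf t * augA A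
            - PNf t * augB B (M := M) * Ri * (augB B (M := M))ᵀ * PNf t
            + augQ β Q)) t)
    (hPNT : PNf T = augQ β Qf)
    (P : ℝ → Matrix (Fin n) (Fin n) ℝ)
    (hP : ∀ t ∈ Set.Icc (0 : ℝ) T,
      HasDerivAt P (-((A i₀)ᵀ * P t + P t * A i₀ - P t * B * Ri * Bᵀ * P t + Q)) t)
    (hPT : P T = Qf)
    (G : Matrix (Fin n × Fin M) (Fin n × Fin M) ℝ)
    (hG : G = HMul.hMul (HMul.hMul (augB B (M := M)) Ri) (augB B (M := M))ᵀ)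
    (C₀ : ℝ) (hC₀0 : 0 ≤ C₀) (hC₀ : ∀ s ∈ Set.Icc (0 : ℝ) T, ‖augQ (ev i₀) (P s)‖ ≤ C₀)
    (L : ℝ)
    (hL : L = 1 + (Fintype.card (Fin n × Fin M) : ℝ) * ‖(augA A)ᵀ‖
        + (Fintype.card (Fin n × Fin M) : ℝ) * ‖augA A‖
        + (Fintype.card (Fin n × Fin M) : ℝ) * (Fintype.card (Fin n × Fin M) : ℝ) * ‖G‖ * (C₀ + 1)
        + (Fintype.card (Fin n × Fin M) : ℝ) * (Fintype.card (Fin n × Fin M) : ℝ) * ‖G‖ * C₀)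
    (hsmall : gronwallBound ‖augQ β Qf - augQ (ev i₀) Qf‖ L ‖augQ β Q - augQ (ev i₀) Q‖ T < 1) :
    ∀ s ∈ Set.Icc (0 : ℝ) T,
      ‖PNf s - augQ (ev i₀) (P s)‖
        ≤ gronwallBound ‖augQ β Qf - augQ (ev i₀) Qf‖ L ‖augQ β Q - augQ (ev i₀) Q‖ T := by
  have hc0 : (0:ℝ) ≤ (Fintype.card (Fin n × Fin M) : ℝ) := Nat.cast_nonneg _
  set c : ℝ := (Fintype.card (Fin n × Fin M) : ℝ) with hcdef
  set δ : ℝ := ‖augQ β Qf - augQ (ev i₀) Qf‖ with hδdef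
  set ε : ℝ := ‖augQ β Q - augQ (ev i₀) Q‖ with hεdef
  have hδ0 : 0 ≤ δ := norm_nonneg _
  have hε0 : 0 ≤ ε := norm_nonneg _
  have hL1 : 1 ≤ L := by
    have h1 : 0 ≤ c * ‖(augA A)ᵀ‖ := by positivity
    have h2 : 0 ≤ c * ‖augA A‖ := by positivity
    have h3 : 0 ≤ c * c * ‖G‖ * (C₀ + 1) :=
      mul_nonneg (by positivity) (by linarith)
    have h4 : 0 ≤ c * c * ‖G‖ * C₀ := mul_nonneg (by positivity) hC₀0
    rw [hL]; linarith
  have hL0 : 0 < L := lt_of_lt_of_le zero_lt_one hL1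
  -- the derivative of the difference, in a convenient form
  have hdiff : ∀ s ∈ Set.Icc (0:ℝ) T,
      HasDerivAt (fun t => PNf t - augQ (ev i₀) (P t))
        (-((augA A)ᵀ * (PNf s - augQ (ev i₀) (P s)) + (PNf s - augQ (ev i₀) (P s)) * augA A
          - ((PNf s - augQ (ev i₀) (P s)) * G * PNf s
              + augQ (ev i₀) (P s) * G * (PNf s - augQ (ev i₀) (P s)))
          + (augQ β Q - augQ (ev i₀) Q))) s := by
    intro s hs
    have h2 : HasDerivAt (fun t => augQ (ev i₀) (P t))
        (-((augA A)ᵀ * augQ (ev i₀) (P s) + augQ (ev i₀) (P s) * augA A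
          - augQ (ev i₀) (P s) * augB B (M := M) * Ri * (augB B (M := M))ᵀ * augQ (ev i₀) (P s)
          + augQ (ev i₀) Q)) s := by
      rw [transport i₀ A B Ri Q (P s)]
      exact hasDerivAt_augQ (ev i₀) (hP s hs)
    have h3 := (hPNf s hs).sub h2
    convert h3 using 1
    iterate 4 rfl
    rw [regroupM', regroupM', ← hG]
    exact (ringid _ _ _ _ _ _ _).symm
  -- norm bound for the derivative
  have hbound : ∀ X Y : Matrix (Fin n × Fin M) (Fin n × Fin M) ℝ, ‖Y‖ ≤ C₀ → ‖X - Y‖ ≤ 1 →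
      ‖-((augA A)ᵀ * (X - Y) + (X - Y) * augA A - ((X - Y) * G * X + Y * G * (X - Y))
          + (augQ β Q - augQ (ev i₀) Q))‖ ≤ L * ‖X - Y‖ + ε := by
    intro X Y hY hXY
    have h1 : ‖(augA A)ᵀ * (X - Y)‖ ≤ c * ‖(augA A)ᵀ‖ * ‖X - Y‖ := matrix_norm_mul_le _ _
    have h2 : ‖(X - Y) * augA A‖ ≤ c * ‖X - Y‖ * ‖augA A‖ := matrix_norm_mul_le _ _
    have hX : ‖X‖ ≤ C₀ + 1 := by
      have : X = Y + (X - Y) := by abel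
      rw [this]
      calc ‖Y + (X - Y)‖ ≤ ‖Y‖ + ‖X - Y‖ := norm_add_le _ _
        _ ≤ C₀ + 1 := add_le_add hY hXY
    have h3 : ‖(X - Y) * G * X‖ ≤ c * (c * ‖X - Y‖ * ‖G‖) * (C₀ + 1) := by
      calc ‖(X - Y) * G * X‖ ≤ c * ‖(X - Y) * G‖ * ‖X‖ := matrix_norm_mul_le _ _
        _ ≤ c * (c * ‖X - Y‖ * ‖G‖) * (C₀ + 1) := by
            have h4 : ‖(X - Y) * G‖ ≤ c * ‖X - Y‖ * ‖G‖ := matrix_norm_mul_le _ _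
            have h5 : (0:ℝ) ≤ c * ‖(X - Y) * G‖ := by positivity
            exact mul_le_mul (mul_le_mul_of_nonneg_left h4 hc0) hX (norm_nonneg _)
              (by positivity)
    have h6 : ‖Y * G * (X - Y)‖ ≤ c * (c * C₀ * ‖G‖) * ‖X - Y‖ := by
      calc ‖Y * G * (X - Y)‖ ≤ c * ‖Y * G‖ * ‖X - Y‖ := matrix_norm_mul_le _ _
        _ ≤ c * (c * C₀ * ‖G‖) * ‖X - Y‖ := by
            have h7 : ‖Y * G‖ ≤ c * ‖Y‖ * ‖G‖ := matrix_norm_mul_le _ _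
            have h8 : ‖Y * G‖ ≤ c * C₀ * ‖G‖ := by
              refine le_trans h7 ?_
              exact mul_le_mul_of_nonneg_right (mul_le_mul_of_nonneg_left hY hc0)
                (norm_nonneg _)
            exact mul_le_mul_of_nonneg_right (mul_le_mul_of_nonneg_left h8 hc0)
              (norm_nonneg _)
    have htr : ‖-((augA A)ᵀ * (X - Y) + (X - Y) * augA A - ((X - Y) * G * X + Y * G * (X - Y))
        + (augQ β Q - augQ (ev i₀) Q))‖
        ≤ ‖(augA A)ᵀ * (X - Y)‖ + ‖(X - Y) * augA A‖ + ‖(X - Y) * G * X‖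
          + ‖Y * G * (X - Y)‖ + ε := by
      rw [norm_neg]
      calc ‖(augA A)ᵀ * (X - Y) + (X - Y) * augA A - ((X - Y) * G * X + Y * G * (X - Y))
            + (augQ β Q - augQ (ev i₀) Q)‖
          ≤ ‖(augA A)ᵀ * (X - Y) + (X - Y) * augA A - ((X - Y) * G * X + Y * G * (X - Y))‖
            + ‖augQ β Q - augQ (ev i₀) Q‖ := norm_add_le _ _
        _ ≤ (‖(augA A)ᵀ * (X - Y) + (X - Y) * augA A‖ + ‖(X - Y) * G * X + Y * G * (X - Y)‖)
            + ε := by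
            have := norm_sub_le ((augA A)ᵀ * (X - Y) + (X - Y) * augA A)
              ((X - Y) * G * X + Y * G * (X - Y))
            rw [hεdef]; linarith
        _ ≤ _ := by
            have ha := norm_add_le ((augA A)ᵀ * (X - Y)) ((X - Y) * augA A)
            have hb := norm_add_le ((X - Y) * G * X) (Y * G * (X - Y))
            linarith
    have hfin : c * ‖(augA A)ᵀ‖ * ‖X - Y‖ + c * ‖X - Y‖ * ‖augA A‖
        + c * (c * ‖X - Y‖ * ‖G‖) * (C₀ + 1) + c * (c * C₀ * ‖G‖) * ‖X - Y‖ + ε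
        ≤ L * ‖X - Y‖ + ε := by
      rw [hL]
      have h9 : (0:ℝ) ≤ ‖X - Y‖ := norm_nonneg _
      nlinarith [h9]
    linarith
  -- the reversed-time difference and its derivative
  set DD : ℝ → Matrix (Fin n × Fin M) (Fin n × Fin M) ℝ := fun u =>
    -((augA A)ᵀ * (PNf u - augQ (ev i₀) (P u)) + (PNf u - augQ (ev i₀) (P u)) * augA A
      - ((PNf u - augQ (ev i₀) (P u)) * G * PNf u
          + augQ (ev i₀) (P u) * G * (PNf u - augQ (ev i₀) (P u)))
      + (augQ β Q - augQ (ev i₀) Q)) with hDDdef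
  set g : ℝ → Matrix (Fin n × Fin M) (Fin n × Fin M) ℝ :=
    fun t => PNf (T - t) - augQ (ev i₀) (P (T - t)) with hgdef
  have hgd : ∀ x ∈ Set.Icc (0:ℝ) T, HasDerivAt g (-DD (T - x)) x := by
    intro x hx
    have hs : T - x ∈ Set.Icc (0:ℝ) T := ⟨by linarith [hx.2], by linarith [hx.1]⟩
    have h := HasDerivAt.scomp (𝕜 := ℝ) x (hdiff (T - x) hs) ((hasDerivAt_id x).const_sub T)
    convert h using 1
    iterate 4 rfl
    rw [hDDdef]
    simp only [neg_smul, one_smul]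
  have hgc : ∀ x ∈ Set.Icc (0:ℝ) T, ContinuousAt g x := fun x hx => (hgd x hx).continuousAt
  have hg0 : ‖g 0‖ = δ := by
    rw [hgdef]
    simp only [sub_zero]
    rw [hPNT, hPT, hδdef]
  have hδlt1 : δ < 1 := by
    have h := gb_mono hδ0 hL0 hε0 (le_of_lt hT)
    rw [gronwallBound_x0] at h
    linarith
  set S : Set ℝ := {t | t ∈ Set.Icc (0:ℝ) T ∧ ∀ s ∈ Set.Icc (0:ℝ) t, ‖g s‖ ≤ 1} with hSdef
  have hS0 : (0:ℝ) ∈ S := by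
    refine ⟨⟨le_refl 0, hT.le⟩, fun s hs => ?_⟩
    have hs0 : s = 0 := le_antisymm hs.2 hs.1
    rw [hs0, hg0]
    linarith
  have hSbdd : BddAbove S := ⟨T, fun t ht => ht.1.2⟩
  set t₀ : ℝ := sSup S with ht₀def
  have ht₀mem : t₀ ∈ Set.Icc (0:ℝ) T :=
    ⟨le_csSup hSbdd hS0, csSup_le ⟨0, hS0⟩ fun t ht => ht.1.2⟩
  have hg_lt : ∀ s, 0 ≤ s → s < t₀ → ‖g s‖ ≤ 1 := by
    intro s hs0 hst
    obtain ⟨t, htS, hlt⟩ := exists_lt_of_lt_csSup ⟨0, hS0⟩ hst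
    exact htS.2 s ⟨hs0, hlt.le⟩
  have hg_le : ∀ s ∈ Set.Icc (0:ℝ) t₀, ‖g s‖ ≤ 1 := by
    intro s hs
    rcases lt_or_eq_of_le hs.2 with h | h
    · exact hg_lt s hs.1 h
    · rw [h]
      rcases eq_or_lt_of_le ht₀mem.1 with h0 | h0
      · rw [← h0, hg0]
        linarith
      · have hcont : ContinuousWithinAt (fun s => ‖g s‖) (Set.Ico 0 t₀) t₀ :=
          ((hgc t₀ ht₀mem).continuousWithinAt).norm
        haveI hne : (𝓝[Set.Ico 0 t₀] t₀).NeBot := by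
          rw [← mem_closure_iff_nhdsWithin_neBot, closure_Ico h0.ne]
          exact ⟨h0.le, le_refl _⟩
        refine le_of_tendsto hcont ?_
        filter_upwards [self_mem_nhdsWithin] with u hu
        exact hg_lt u hu.1 hu.2
  have hgb : ∀ x ∈ Set.Icc (0:ℝ) t₀, ‖g x‖ ≤ gronwallBound δ L ε (x - 0) := by
    refine norm_le_gronwallBound_of_norm_deriv_right_le
      (f' := fun x => -DD (T - x)) ?_ ?_ hg0.le ?_
    · intro x hx
      exact ((hgc x ⟨hx.1, le_trans hx.2 ht₀mem.2⟩)).continuousWithinAt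
    · intro x hx
      exact (hgd x ⟨hx.1, le_trans hx.2.le ht₀mem.2⟩).hasDerivWithinAt
    · intro x hx
      rw [norm_neg]
      have hs : T - x ∈ Set.Icc (0:ℝ) T :=
        ⟨by linarith [hx.2.le, ht₀mem.2], by linarith [hx.1]⟩
      exact hbound (PNf (T - x)) (augQ (ev i₀) (P (T - x))) (hC₀ _ hs)
        (hg_lt x hx.1 hx.2)
  have ht₀T : t₀ = T := by
    by_contra hne
    have hlt : t₀ < T := lt_of_le_of_ne ht₀mem.2 hne
    have h1 : ‖g t₀‖ < 1 := by
      have h2 := hgb t₀ ⟨ht₀mem.1, le_refl _⟩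
      have h3 : gronwallBound δ L ε (t₀ - 0) ≤ gronwallBound δ L ε T :=
        gb_mono hδ0 hL0 hε0 (by linarith [ht₀mem.1])
      linarith
    have h4 : ∀ᶠ s in 𝓝 t₀, ‖g s‖ < 1 :=
      ((hgc t₀ ht₀mem).tendsto.norm).eventually_lt_const h1
    rw [Metric.eventually_nhds_iff] at h4
    obtain ⟨η, hη, hball⟩ := h4
    have ht₁S : min (t₀ + η / 2) T ∈ S := by
      refine ⟨⟨le_min (by linarith [ht₀mem.1]) hT.le, min_le_right _ _⟩, ?_⟩
      intro s hs
      rcases le_or_gt s t₀ with h | h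
      · exact hg_le s ⟨hs.1, h⟩
      · refine (hball ?_).le
        rw [Real.dist_eq, abs_of_pos (by linarith)]
        have hsle : s ≤ t₀ + η / 2 := le_trans hs.2 (min_le_left _ _)
        linarith
    have h6 : min (t₀ + η / 2) T ≤ t₀ := le_csSup hSbdd ht₁S
    have h7 : t₀ < min (t₀ + η / 2) T := lt_min (by linarith) hlt
    linarith
  intro s hs
  have h1 := hgb (T - s) ⟨by linarith [hs.2], by rw [ht₀T]; linarith [hs.1]⟩
  have h2 : gronwallBound δ L ε (T - s - 0) ≤ gronwallBound δ L ε T :=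
    gb_mono hδ0 hL0 hε0 (by linarith [hs.1])
  have h3 : g (T - s) = PNf s - augQ (ev i₀) (P s) := by
    rw [hgdef]
    simp only [sub_sub_cancel]
  rw [h3] at h1
  linarith


theorem stmt_17 {n m M : ℕ} (hM : 0 < M) (T : ℝ) (hT : 0 < T)
    (B : Matrix (Fin n) (Fin m) ℝ)
    (Q Qf : Matrix (Fin n) (Fin n) ℝ) (R : Matrix (Fin m) (Fin m) ℝ)
    (hQ : Q.PosSemidef) (hQf : Qf.PosSemidef) (hR : R.PosDef)
    (A : Fin M → Matrix (Fin n) (Fin n) ℝ)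
    (α : ℕ → Fin M → ℝ) (hα0 : ∀ N i, 0 ≤ α N i) (hα1 : ∀ N, ∑ i, α N i = 1)
    -- `α₁ᴺ → 1` and `αᵢᴺ → 0` for `i = 2, …, M`
    (hconv1 : Tendsto (fun N => α N ⟨0, hM⟩) atTop (𝓝 1))
    (hconv0 : ∀ i : Fin M, i ≠ ⟨0, hM⟩ → Tendsto (fun N => α N i) atTop (𝓝 0))
    -- the solutions of the augmented Riccati equations on `[0,T]`
    (PN : ℕ → ℝ → Matrix (Fin n × Fin M) (Fin n × Fin M) ℝ)
    (hPN : ∀ N, ∀ t ∈ Set.Icc (0 : ℝ) T,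
      HasDerivAt (PN N)
        (-((augA A)ᵀ * PN N t + PN N t * augA A
            - PN N t * augB B (M := M) * R⁻¹ * (augB B (M := M))ᵀ * PN N t
            + augQ (α N) Q)) t)
    (hPNT : ∀ N, PN N T = augQ (α N) Qf)
    -- the solution of the `n`-dimensional Riccati equation for `A₁` on `[0,T]`
    (P : ℝ → Matrix (Fin n) (Fin n) ℝ)
    (hP : ∀ t ∈ Set.Icc (0 : ℝ) T,
      HasDerivAt P (-((A ⟨0, hM⟩)ᵀ * P t + P t * A ⟨0, hM⟩
            - P t * B * R⁻¹ * Bᵀ * P t + Q)) t)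
    (hPT : P T = Qf) :
    -- the feedback controls `ūᴺ(s,x₀) = −R⁻¹ B̃ᵀ P̃ᴺ(s) (x₀,…,x₀)` converge uniformly on
    -- `[0,T] × K` to `ū(s,x₀) = −R⁻¹ Bᵀ P(s) x₀`, for every compact `K`
    ∀ K : Set (EuclideanSpace ℝ (Fin n)), IsCompact K →
      TendstoUniformlyOn
        (fun (N : ℕ) (q : ℝ × EuclideanSpace ℝ (Fin n)) =>
          -(app (R⁻¹ * (augB B (M := M))ᵀ * PN N q.1) (bigvec (M := M) q.2)))
        (fun q => -(app (R⁻¹ * Bᵀ * P q.1) q.2))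
        atTop (Set.Icc (0 : ℝ) T ×ˢ K) := by
  intro K hK
  set i₀ : Fin M := ⟨0, hM⟩ with hi₀
  set G : Matrix (Fin n × Fin M) (Fin n × Fin M) ℝ :=
    HMul.hMul (HMul.hMul (augB B (M := M)) R⁻¹) ((augB B (M := M))ᵀ) with hGdef
  set cσ : ℝ := (Fintype.card (Fin n × Fin M) : ℝ) with hcσ
  have hcσ0 : 0 ≤ cσ := Nat.cast_nonneg _
  -- a bound for the limit solution on [0,T]
  have hPinfCont : ContinuousOn (fun s => augQ (ev i₀) (P s)) (Set.Icc (0:ℝ) T) :=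
    fun s hs => ((hasDerivAt_augQ (ev i₀) (hP s hs)).continuousAt).continuousWithinAt
  obtain ⟨C₁, hC₁⟩ := (isCompact_Icc).exists_bound_of_continuousOn hPinfCont
  set C₀ : ℝ := max C₁ 0 with hC₀def
  have hC₀0 : 0 ≤ C₀ := le_max_right _ _
  have hC₀ : ∀ s ∈ Set.Icc (0:ℝ) T, ‖augQ (ev i₀) (P s)‖ ≤ C₀ :=
    fun s hs => le_trans (hC₁ s hs) (le_max_left _ _)
  set L : ℝ := 1 + cσ * ‖(augA A)ᵀ‖ + cσ * ‖augA A‖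
      + cσ * cσ * ‖G‖ * (C₀ + 1) + cσ * cσ * ‖G‖ * C₀ with hLdef
  have hL0 : 0 < L := by
    have h1 : 0 ≤ cσ * ‖(augA A)ᵀ‖ := by positivity
    have h2 : 0 ≤ cσ * ‖augA A‖ := by positivity
    have h3 : 0 ≤ cσ * cσ * ‖G‖ * (C₀ + 1) := mul_nonneg (by positivity) (by linarith)
    have h4 : 0 ≤ cσ * cσ * ‖G‖ * C₀ := mul_nonneg (by positivity) hC₀0
    rw [hLdef]; linarith
  -- convergence of the weights and of the perturbed cost matrices
  have hαe : Tendsto (fun N => α N) atTop (𝓝 (ev i₀)) := by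
    rw [tendsto_pi_nhds]
    intro i
    by_cases h : i = i₀
    · subst h; simpa [ev] using hconv1
    · simpa [ev, h] using hconv0 i h
  have hnormconv : ∀ Qm : Matrix (Fin n) (Fin n) ℝ,
      Tendsto (fun N => ‖augQ (α N) Qm - augQ (ev i₀) Qm‖) atTop (𝓝 0) := by
    intro Qm
    have h1 : Continuous (augQalpha (M := M) Qm) :=
      LinearMap.continuous_of_finiteDimensional _
    have h2 : Tendsto (fun N => augQ (α N) Qm) atTop (𝓝 (augQ (ev i₀) Qm)) :=
      (h1.tendsto (ev i₀)).comp hαe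
    have h3 := h2.sub (tendsto_const_nhds (x := augQ (ev i₀) Qm))
    rw [sub_self] at h3
    simpa using h3.norm
  set bN : ℕ → ℝ := fun N =>
    gronwallBound ‖augQ (α N) Qf - augQ (ev i₀) Qf‖ L ‖augQ (α N) Q - augQ (ev i₀) Q‖ T
    with hbNdef
  have hbconv : Tendsto bN atTop (𝓝 0) := by
    have hform : bN = fun N => ‖augQ (α N) Qf - augQ (ev i₀) Qf‖ * Real.exp (L * T)
        + ‖augQ (α N) Q - augQ (ev i₀) Q‖ / L * (Real.exp (L * T) - 1) := by
      funext N
      rw [hbNdef]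
      simp only [gronwallBound_of_K_ne_0 hL0.ne']
    rw [hform]
    have h := (((hnormconv Qf).mul_const (Real.exp (L * T)))).add
      (((hnormconv Q).div_const L).mul_const (Real.exp (L * T) - 1))
    simpa using h
  -- pass to the uniform estimate
  rw [Metric.tendstoUniformlyOn_iff]
  intro ep hep
  obtain ⟨Cx, hCx⟩ := hK.exists_bound_of_continuousOn continuousOn_id
  set Cx' : ℝ := max Cx 0 with hCx'def
  have hCx'0 : 0 ≤ Cx' := le_max_right _ _
  have hxK : ∀ x ∈ K, ‖x‖ ≤ Cx' := fun x hx => le_trans (hCx x hx) (le_max_left _ _)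
  set RB : Matrix (Fin m) (Fin n × Fin M) ℝ := HMul.hMul R⁻¹ ((augB B (M := M))ᵀ)
    with hRBdef
  set cm : ℝ := (Fintype.card (Fin m) : ℝ) with hcm
  set Cbig : ℝ := cm * (cσ * (cσ * ‖RB‖) * (cσ * Cx')) with hCbig
  have hCbig0 : 0 ≤ Cbig := by
    rw [hCbig, hcm]
    positivity
  have hev : ∀ᶠ N in atTop, bN N < min 1 (ep / (Cbig + 1)) :=
    hbconv.eventually_lt_const (lt_min one_pos (by positivity))
  filter_upwards [hev] with N hN
  rintro ⟨s, x⟩ hq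
  obtain ⟨hs, hx⟩ := Set.mem_prod.1 hq
  -- apply the Grönwall estimate
  have hsmall : gronwallBound ‖augQ (α N) Qf - augQ (ev i₀) Qf‖ L
      ‖augQ (α N) Q - augQ (ev i₀) Q‖ T < 1 :=
    lt_of_lt_of_le hN (min_le_left _ _)
  have hDb := mainbound i₀ hT B Q Qf R⁻¹ A (α N) (PN N) (hPN N) (hPNT N) P hP hPT
    G hGdef C₀ hC₀0 hC₀ L hLdef hsmall
  -- the limit control written through the augmented matrices
  have hlim : app (HMul.hMul RB (augQ (ev i₀) (P s))) (bigvec (M := M) x)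
      = app (R⁻¹ * Bᵀ * P s) x := by
    rw [hRBdef, Matrix.mul_assoc, ← Matrix.mul_assoc, lemD1 i₀ R⁻¹ B (P s), lemD2]
  have hΔ : ‖augQ (ev i₀) (P s) - PN N s‖ ≤ bN N := by
    rw [norm_sub_rev]
    exact hDb s hs
  have hbN0 : 0 ≤ bN N := le_trans (norm_nonneg _) hΔ
  have hd1 : dist (-(app (R⁻¹ * Bᵀ * P s) x))
      (-(app (HMul.hMul RB (PN N s)) (bigvec (M := M) x)))
      = ‖app (HMul.hMul RB (augQ (ev i₀) (P s) - PN N s)) (bigvec (M := M) x)‖ := by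
    rw [dist_neg_neg, ← hlim, dist_eq_norm, app_sub, ← Matrix.mul_sub]
  have hb1 := app_norm_le (HMul.hMul RB (augQ (ev i₀) (P s) - PN N s)) (bigvec (M := M) x)
  rw [← hcm, ← hcσ] at hb1
  have hcm0 : (0:ℝ) ≤ cm := by rw [hcm]; positivity
  have hb2 : ‖HMul.hMul RB (augQ (ev i₀) (P s) - PN N s)‖ ≤ cσ * ‖RB‖ * bN N := by
    have h := matrix_norm_mul_le RB (augQ (ev i₀) (P s) - PN N s)
    rw [← hcσ] at h
    calc ‖HMul.hMul RB (augQ (ev i₀) (P s) - PN N s)‖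
        ≤ cσ * ‖RB‖ * ‖augQ (ev i₀) (P s) - PN N s‖ := h
      _ ≤ cσ * ‖RB‖ * bN N := mul_le_mul_of_nonneg_left hΔ (by positivity)
  have hb3 : ‖bigvec (M := M) x‖ ≤ cσ * Cx' := by
    have h := norm_le_card (bigvec (M := M) x) Cx' hCx'0
      (fun p => le_trans (coord_le x p.1) (hxK x hx))
    rwa [← hcσ] at h
  have hm1 : cσ * ‖HMul.hMul RB (augQ (ev i₀) (P s) - PN N s)‖ * ‖bigvec (M := M) x‖
      ≤ cσ * (cσ * ‖RB‖ * bN N) * (cσ * Cx') := by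
    refine mul_le_mul (mul_le_mul_of_nonneg_left hb2 hcσ0) hb3 (norm_nonneg _) ?_
    have : (0:ℝ) ≤ cσ * ‖RB‖ * bN N := by positivity
    positivity
  have hm2 : cm * (cσ * ‖HMul.hMul RB (augQ (ev i₀) (P s) - PN N s)‖ * ‖bigvec (M := M) x‖)
      ≤ cm * (cσ * (cσ * ‖RB‖ * bN N) * (cσ * Cx')) :=
    mul_le_mul_of_nonneg_left hm1 hcm0
  have heq2 : cm * (cσ * (cσ * ‖RB‖ * bN N) * (cσ * Cx')) = Cbig * bN N := by
    rw [hCbig]; ring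
  have h9 : bN N < ep / (Cbig + 1) := lt_of_lt_of_le hN (min_le_right _ _)
  have h10 : Cbig * bN N ≤ Cbig * (ep / (Cbig + 1)) :=
    mul_le_mul_of_nonneg_left h9.le hCbig0
  have h11 : Cbig * (ep / (Cbig + 1)) < ep := by
    have hlt1 : Cbig / (Cbig + 1) < 1 := (div_lt_one (by linarith)).2 (by linarith)
    calc Cbig * (ep / (Cbig + 1)) = (Cbig / (Cbig + 1)) * ep := by ring
      _ < 1 * ep := mul_lt_mul_of_pos_right hlt1 hep
      _ = ep := one_mul ep
  calc dist (-(app (R⁻¹ * Bᵀ * P s) x))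
        (-(app (HMul.hMul RB (PN N s)) (bigvec (M := M) x)))
      = ‖app (HMul.hMul RB (augQ (ev i₀) (P s) - PN N s)) (bigvec (M := M) x)‖ := hd1
    _ ≤ cm * (cσ * ‖HMul.hMul RB (augQ (ev i₀) (P s) - PN N s)‖ * ‖bigvec (M := M) x‖) := hb1
    _ ≤ cm * (cσ * (cσ * ‖RB‖ * bN N) * (cσ * Cx')) := hm2
    _ = Cbig * bN N := heq2
    _ < ep := by linarith
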